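/- For any 0 < c < 1 and any clustering C of n vertices, let C' be the clustering obtained from C by splitting into singletons all clusters of C of size less than c·n. Then cost(C') ≤ cost(C) + c·n²/2. -/

import Mathlib

/-- Edge pairs of the complete graph on `Fin n`. -/
def edgePairs (n : ℕ) : Finset (Fin n × Fin n) :=
  Finset.univ.filter (fun p => p.1 < p.2)

/-- The cost (number of disagreements) of the clustering given by `f`. -/
def clCost {n : ℕ} (pos : Fin n → Fin n → Bool) (f : Fin n → ℕ) : ℕ :=
  ((edgePairs n).filter (fun p => ¬ (f p.1 = f p.2 ↔ pos p.1 p.2 = true))).card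

/-- Lemma 14 of Bansal et al.: if `C'` is obtained from `C` by
splitting into singletons every cluster of size less than `c·n`, then
`cost(C') ≤ cost(C) + c·n²/2`. -/
theorem cost_of_splitting {n : ℕ}
    (pos : Fin n → Fin n → Bool) (_hsym : ∀ u v, pos u v = pos v u)
    (c : ℝ) (hc0 : 0 < c) (hc1 : c < 1)
    (f g : Fin n → ℕ)
    (hg : ∀ u v : Fin n, g u = g v ↔
      ((f u = f v ∧ c * n ≤ ((Finset.univ.filter (fun w => f w = f u)).card : ℝ))
        ∨ u = v)) :
    (clCost pos g : ℝ) ≤ clCost pos f + c * n ^ 2 / 2 := by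
  classical
  set S : Fin n → ℕ := fun u => (Finset.univ.filter (fun w => f w = f u)).card with hS
  set B : Finset (Fin n × Fin n) :=
    (edgePairs n).filter (fun p => f p.1 = f p.2 ∧ g p.1 ≠ g p.2) with hB
  have hedge : ∀ p : Fin n × Fin n, p ∈ edgePairs n ↔ p.1 < p.2 := by
    intro p; simp [edgePairs]
  -- Step 1 : clCost g ≤ clCost f + B.card
  have step1 : clCost pos g ≤ clCost pos f + B.card := by
    have hsub : (edgePairs n).filter (fun p => ¬ (g p.1 = g p.2 ↔ pos p.1 p.2 = true)) ⊆
        ((edgePairs n).filter (fun p => ¬ (f p.1 = f p.2 ↔ pos p.1 p.2 = true))) ∪ B := by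
      intro p hp
      rw [Finset.mem_filter] at hp
      obtain ⟨hpe, hpd⟩ := hp
      have hne : p.1 ≠ p.2 := ne_of_lt ((hedge p).mp hpe)
      rw [Finset.mem_union, Finset.mem_filter, hB, Finset.mem_filter]
      by_cases hfp : f p.1 = f p.2
      · by_cases hgp : g p.1 = g p.2
        · exact Or.inl ⟨hpe, fun h => hpd (iff_of_true hgp (h.mp hfp))⟩
        · by_cases hpos : pos p.1 p.2 = true
          · exact Or.inr ⟨hpe, hfp, hgp⟩
          · exact absurd (iff_of_false hgp hpos) hpd
      · have hgne : g p.1 ≠ g p.2 := by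
          intro h
          rcases (hg p.1 p.2).mp h with ⟨h1, _⟩ | h1
          · exact hfp h1
          · exact hne h1
        have hpos : pos p.1 p.2 = true := by
          by_contra hpos
          exact hpd (iff_of_false hgne hpos)
        exact Or.inl ⟨hpe, fun h => hfp (h.mpr hpos)⟩
    calc clCost pos g
        ≤ (((edgePairs n).filter (fun p => ¬ (f p.1 = f p.2 ↔ pos p.1 p.2 = true))) ∪ B).card :=
          Finset.card_le_card hsub
      _ ≤ clCost pos f + B.card := Finset.card_union_le _ _
  -- The doubled set P
  set P : Finset (Fin n × Fin n) :=
    Finset.univ.filter (fun p => f p.1 = f p.2 ∧ ¬ (c * n ≤ (S p.1 : ℝ)) ∧ p.1 ≠ p.2) with hP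
  have key : ∀ q : Fin n × Fin n, q ∈ B →
      q.1 ≠ q.2 ∧ f q.1 = f q.2 ∧ ¬ (c * n ≤ (S q.1 : ℝ)) := by
    intro q hq
    rw [hB, Finset.mem_filter] at hq
    obtain ⟨hqe, hqf, hqg⟩ := hq
    have hne := ne_of_lt ((hedge q).mp hqe)
    refine ⟨hne, hqf, ?_⟩
    intro hbig
    exact hqg ((hg q.1 q.2).mpr (Or.inl ⟨hqf, hbig⟩))
  have hBP : B ∪ B.image Prod.swap ⊆ P := by
    intro p hp
    rw [Finset.mem_union] at hp
    rcases hp with hp | hp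
    · obtain ⟨h1, h2, h3⟩ := key p hp
      rw [hP, Finset.mem_filter]
      exact ⟨Finset.mem_univ _, h2, h3, h1⟩
    · rw [Finset.mem_image] at hp
      obtain ⟨q, hq, rfl⟩ := hp
      obtain ⟨h1, h2, h3⟩ := key q hq
      rw [hP, Finset.mem_filter]
      have hSswap : S q.2 = S q.1 := by
        simp only [hS]
        rw [← h2]
      refine ⟨Finset.mem_univ _, ?_, ?_, ?_⟩
      · exact h2.symm
      · show ¬ (c * n ≤ (S q.2 : ℝ))
        rw [hSswap]; exact h3
      · exact h1.symm
  have hcard2 : 2 * B.card ≤ P.card := by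
    have hdisj : Disjoint B (B.image Prod.swap) := by
      rw [Finset.disjoint_left]
      intro p hp hp'
      rw [hB, Finset.mem_filter] at hp
      have h1 : p.1 < p.2 := (hedge p).mp hp.1
      rw [Finset.mem_image] at hp'
      obtain ⟨q, hq, hqe⟩ := hp'
      rw [hB, Finset.mem_filter] at hq
      have h2 : q.1 < q.2 := (hedge q).mp hq.1
      rw [← hqe] at h1
      simp only [Prod.fst_swap, Prod.snd_swap] at h1
      exact absurd h1 (not_lt.mpr h2.le)
    calc 2 * B.card = B.card + (B.image Prod.swap).card := by
          rw [Finset.card_image_of_injective _ Prod.swap_injective]; ring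
      _ = (B ∪ B.image Prod.swap).card := (Finset.card_union_of_disjoint hdisj).symm
      _ ≤ P.card := Finset.card_le_card hBP
  have hPcard : (P.card : ℝ) ≤ c * n * n := by
    have hfib : P.card = ∑ u : Fin n, (P.filter (fun p => p.1 = u)).card :=
      Finset.card_eq_sum_card_fiberwise (fun p _ => Finset.mem_univ p.1)
    have hbound : ∀ u : Fin n, ((P.filter (fun p => p.1 = u)).card : ℝ) ≤ c * n := by
      intro u
      by_cases hsmall : c * n ≤ (S u : ℝ)
      · have hempty : P.filter (fun p => p.1 = u) = ∅ := by
          rw [Finset.filter_eq_empty_iff]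
          intro p hp hpu
          rw [hP, Finset.mem_filter] at hp
          exact hp.2.2.1 (by rw [hpu]; exact hsmall)
        rw [hempty]
        simp only [Finset.card_empty, Nat.cast_zero]
        positivity
      · have hle : (P.filter (fun p => p.1 = u)).card ≤ S u := by
          apply Finset.card_le_card_of_injOn (fun p => p.2)
          · intro p hp
            rw [Finset.mem_coe, Finset.mem_filter, hP, Finset.mem_filter] at hp
            obtain ⟨⟨_, hf, _, _⟩, hpu⟩ := hp
            simp only [hS, Finset.mem_coe, Finset.mem_filter]
            exact ⟨Finset.mem_univ _, by rw [← hpu]; exact hf.symm⟩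
          · intro p hp q hq h
            rw [Finset.mem_coe, Finset.mem_filter] at hp hq
            exact Prod.ext (hp.2.trans hq.2.symm) h
        have hlt : (S u : ℝ) < c * n := lt_of_not_ge hsmall
        calc ((P.filter (fun p => p.1 = u)).card : ℝ) ≤ (S u : ℝ) := by exact_mod_cast hle
          _ ≤ c * n := hlt.le
    calc (P.card : ℝ) = ∑ u : Fin n, ((P.filter (fun p => p.1 = u)).card : ℝ) := by
          rw [hfib]; push_cast; ring
      _ ≤ ∑ _u : Fin n, (c * n) := Finset.sum_le_sum (fun u _ => hbound u)
      _ = n * (c * n) := by rw [Finset.sum_const, Finset.card_univ, Fintype.card_fin, nsmul_eq_mul]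
      _ = c * n * n := by ring
  have hBcard : (B.card : ℝ) ≤ c * n ^ 2 / 2 := by
    have h2 : ((2 * B.card : ℕ) : ℝ) ≤ (P.card : ℝ) := by exact_mod_cast hcard2
    push_cast at h2
    nlinarith [hPcard]
  have hs1 : (clCost pos g : ℝ) ≤ (clCost pos f : ℝ) + (B.card : ℝ) := by
    exact_mod_cast step1
  linarith
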